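/- Let (E,H,F,X,Y) be an osp(1|2)-representation on a complex vector space W. Then the Casimir operator Ω and the super-Casimir operator Σ satisfy the identity Ω = (1/2)·Σ∘Σ − (1/8)·id as endomorphisms of W. -/
import Mathlib


/-- An `osp(1|2)`-representation on a complex vector space `W`: a 5-tuple of
endomorphisms `(E,H,F,X,Y)` satisfying the twelve defining relations of `osp(1|2)`
realized by ungraded operators. -/
def IsOspRep {W : Type*} [AddCommGroup W] [Module ℂ W]
    (E H F X Y : Module.End ℂ W) : Prop :=
  H * E - E * H = (2 : ℂ) • E ∧
  H * F - F * H = (-2 : ℂ) • F ∧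
  E * F - F * E = H ∧
  H * X - X * H = X ∧
  E * X - X * E = 0 ∧
  F * X - X * F = -Y ∧
  H * Y - Y * H = -Y ∧
  E * Y - Y * E = -X ∧
  F * Y - Y * F = 0 ∧
  X * X = E ∧
  X * Y + Y * X = H ∧
  Y * Y = -F

/-- The Casimir operator `Ω = E∘F + F∘E + (1/2)·H∘H + (1/2)·(Y∘X − X∘Y)`. -/
noncomputable def OmegaOsp {W : Type*} [AddCommGroup W] [Module ℂ W]
    (E H F X Y : Module.End ℂ W) : Module.End ℂ W :=
  E * F + F * E + (1/2 : ℂ) • (H * H) + (1/2 : ℂ) • (Y * X - X * Y)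

/-- The super-Casimir operator `Σ = X∘Y − Y∘X + (1/2)·id`. -/
noncomputable def SigmaOsp {W : Type*} [AddCommGroup W] [Module ℂ W]
    (X Y : Module.End ℂ W) : Module.End ℂ W :=
  X * Y - Y * X + (1/2 : ℂ) • (1 : Module.End ℂ W)

/-- For any `osp(1|2)`-representation, `Ω = (1/2)·Σ∘Σ − (1/8)·id`. -/
theorem casimir_eq_half_superCasimir_sq {W : Type*} [AddCommGroup W] [Module ℂ W]
    (E H F X Y : Module.End ℂ W) (hrep : IsOspRep E H F X Y) :
    OmegaOsp E H F X Y
      = (1/2 : ℂ) • (SigmaOsp X Y * SigmaOsp X Y)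
        - (1/8 : ℂ) • (1 : Module.End ℂ W) := by
  obtain ⟨h1, h2, h3, h4, h5, h6, h7, h8, h9, h10, h11, h12⟩ := hrep
  have hXY : X * Y = H - Y * X := eq_sub_of_add_eq h11
  have hEF : E * F = H + F * E := sub_eq_iff_eq_add.mp h3
  have hHX : H * X = X + X * H := sub_eq_iff_eq_add.mp h4
  have hHY : H * Y = -Y + Y * H := sub_eq_iff_eq_add.mp h7
  have hcomm : H * (Y * X) = Y * X * H := by
    calc H * (Y * X) = (H * Y) * X := by rw [mul_assoc]
    _ = (-Y + Y * H) * X := by rw [hHY]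
    _ = -(Y * X) + Y * (H * X) := by rw [add_mul, neg_mul, mul_assoc]
    _ = -(Y * X) + Y * (X + X * H) := by rw [hHX]
    _ = Y * X * H := by rw [mul_add, ← mul_assoc]; abel
  have hsq : (Y * X) * (Y * X) = Y * X * H + Y * X + F * E := by
    calc (Y * X) * (Y * X) = Y * ((X * Y) * X) := by
          simp [mul_assoc]
    _ = Y * ((H - Y * X) * X) := by rw [hXY]
    _ = Y * (H * X) - (Y * Y) * (X * X) := by
          simp [sub_mul, mul_sub, mul_assoc]
    _ = Y * (X + X * H) - (-F) * E := by rw [hHX, h12, h10]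
    _ = Y * X * H + Y * X + F * E := by
          rw [mul_add, ← mul_assoc, neg_mul]; abel
  unfold OmegaOsp SigmaOsp
  rw [hXY, hEF]
  simp only [mul_add, add_mul, sub_mul, mul_sub, smul_mul_assoc, mul_smul_comm,
    mul_one, one_mul, smul_smul, hcomm, hsq]
  module
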